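/- Let (Ω, F, μ) be a probability space with F a σ-algebra, let M be a first-order structure, and let A, B, C be countable sets of functions from Ω to M such that for every first-order formula φ(v̄) and every tuple ā from A∪B∪C, the set {ω : M ⊨ φ(ā(ω))} belongs to F. Then the set {ω : A(ω) ⫝ᵃ_{C(ω)} B(ω)} belongs to F, where A(ω) = {a(ω) : a ∈ A} etc. -/

import Mathlib

open FirstOrder MeasureTheory

/-- First-order algebraic closure: `b ∈ Acl L X` iff `b` satisfies a formula with
parameters from `X` that has only finitely many solutions. -/
def Acl (L : FirstOrder.Language) {M : Type*} [L.Structure M] (X : Set M) : Set M :=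
  {b | ∃ (n : ℕ) (φ : L.Formula (Fin n ⊕ Fin 1)) (c : Fin n → M),
    (∀ i, c i ∈ X) ∧
    {y : M | φ.Realize (Sum.elim c (fun _ => y))}.Finite ∧
    φ.Realize (Sum.elim c (fun _ => b))}

open FirstOrder.Language Set
namespace AclAux

variable {L : FirstOrder.Language} {M : Type*} [L.Structure M]

/-- Solution set of a formula with one distinguished variable and parameters. -/
def solSet {n : ℕ} (φ : L.Formula (Fin n ⊕ Fin 1)) (c : Fin n → M) : Set M :=
  {y : M | φ.Realize (Sum.elim c (fun _ => y))}

/- bridge: bounded cardinality vs injections -/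
theorem exists_inj_iff (S : Set M) (k : ℕ) :
    (∃ i : Fin (k + 1) → M, (∀ j, i j ∈ S) ∧ Function.Injective i) ↔
      ((k : ℕ∞) < S.encard) := by
  constructor
  · rintro ⟨i, hiS, hinj⟩
    have h1 : (Set.range i).encard = ((k + 1 : ℕ) : ℕ∞) := by
      rw [← Set.image_univ, hinj.encard_image, Set.encard_univ]
      simp
    have h2 : (Set.range i).encard ≤ S.encard :=
      Set.encard_le_encard (by rintro x ⟨j, rfl⟩; exact hiS j)
    calc (k : ℕ∞) < ((k + 1 : ℕ) : ℕ∞) := by exact_mod_cast Nat.lt_succ_self k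
      _ ≤ S.encard := h1 ▸ h2
  · intro hk
    have hk' : ((k + 1 : ℕ) : ℕ∞) ≤ S.encard := by
      have h := Order.add_one_le_of_lt hk
      rw [Nat.cast_add, Nat.cast_one]
      exact h
    obtain ⟨t, htS, htc⟩ := Set.exists_subset_encard_eq hk'
    have htfin : t.Finite := Set.finite_of_encard_eq_coe htc
    have hcard : htfin.toFinset.card = k + 1 := by
      have := htfin.encard_eq_coe_toFinset_card
      rw [this] at htc
      exact_mod_cast htc
    have e := Fintype.equivFinOfCardEq ((Fintype.card_coe htfin.toFinset).trans hcard)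
    refine ⟨fun j => (e.symm j : M), fun j => ?_, ?_⟩
    · exact htS (htfin.mem_toFinset.1 (e.symm j).2)
    · intro a b hab
      exact e.symm.injective (Subtype.val_injective hab)

end AclAux

namespace AclAux

variable {L : FirstOrder.Language} {M : Type*} [L.Structure M]

theorem formulaRealize_iInf {α β : Type*} (s : Finset β) (f : β → L.Formula α) (v : α → M) :
    Formula.Realize (BoundedFormula.iInf (fun b : s => f b) : L.Formula α) v ↔
      ∀ b ∈ s, Formula.Realize (f b) v := by
  simp only [Formula.Realize, BoundedFormula.realize_iInf, Subtype.forall]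

theorem formulaRealize_iSup {α β : Type*} (s : Finset β) (f : β → L.Formula α) (v : α → M) :
    Formula.Realize (BoundedFormula.iSup (fun b : s => f b) : L.Formula α) v ↔
      ∃ b ∈ s, Formula.Realize (f b) v := by
  simp only [Formula.Realize, BoundedFormula.realize_iSup, Subtype.exists, exists_prop]

/-- Formula asserting that at most `k` elements satisfy `φ(·, params)`. -/
noncomputable def atMostF {n : ℕ} (φ : L.Formula (Fin n ⊕ Fin 1)) (k : ℕ) : L.Formula (Fin n) :=
  Formula.not (Formula.iExs (Fin (k + 1))
    ((BoundedFormula.iInf (fun i : (Finset.univ : Finset (Fin (k + 1))) =>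
        (fun i => φ.relabel (Sum.map id (fun _ => i))) i)) ⊓
     (BoundedFormula.iInf (fun p : (Finset.univ.filter (fun p : Fin (k + 1) × Fin (k + 1) => p.1 ≠ p.2)) =>
        (fun p : Fin (k + 1) × Fin (k + 1) => Formula.not ((Term.var (Sum.inr p.1)).equal (Term.var (Sum.inr p.2)))) p))))

theorem realize_atMostF {n : ℕ} (φ : L.Formula (Fin n ⊕ Fin 1)) (k : ℕ) (c : Fin n → M) :
    (atMostF φ k).Realize c ↔ (solSet φ c).encard ≤ k := by
  rw [← not_lt, ← exists_inj_iff]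
  simp only [atMostF, Formula.realize_not, Formula.realize_iExs, id_eq]
  apply not_congr
  apply exists_congr
  intro i
  have hfe : (fun a => Sum.elim c i a) = Sum.elim c i := rfl
  rw [Formula.realize_inf,
    formulaRealize_iInf (f := fun i : Fin (k + 1) => φ.relabel (Sum.map id (fun _ => i))),
    formulaRealize_iInf (f := fun p : Fin (k + 1) × Fin (k + 1) =>
      Formula.not ((Term.var (Sum.inr p.1)).equal (Term.var (Sum.inr p.2))))]
  constructor
  · rintro ⟨h1, h2⟩
    refine ⟨fun j => ?_, fun a b hab => ?_⟩
    · have := h1 j (Finset.mem_univ j)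
      rw [Formula.realize_relabel] at this
      have hco : (Sum.elim c i) ∘ (Sum.map id (fun _ : Fin 1 => j)) = Sum.elim c (fun _ : Fin 1 => i j) := by
        funext x; cases x <;> simp
      rwa [hco] at this
    · by_contra hne
      have := h2 (a, b) (by simp [hne])
      rw [Formula.realize_not, Formula.realize_equal] at this
      simp only [Term.realize_var, Sum.elim_inr] at this
      exact this hab
  · rintro ⟨h1, h2⟩
    constructor
    · intro j _
      rw [Formula.realize_relabel]
      have hco : (Sum.elim c i) ∘ (Sum.map id (fun _ : Fin 1 => j)) = Sum.elim c (fun _ : Fin 1 => i j) := by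
        funext x; cases x <;> simp
      rw [hco]
      exact h1 j
    · rintro ⟨a, b⟩ hab
      simp only [Finset.mem_filter, Finset.mem_univ, true_and] at hab
      rw [Formula.realize_not, Formula.realize_equal]
      simp only [Term.realize_var, Sum.elim_inr]
      exact fun h => hab (h2 h)

end AclAux

namespace AclAux

variable {L : FirstOrder.Language} {M : Type*} [L.Structure M]

/-- `φ` together with the guard that it has at most `k` solutions. -/
noncomputable def witF {n : ℕ} (φ : L.Formula (Fin n ⊕ Fin 1)) (k : ℕ) :
    L.Formula (Fin n ⊕ Fin 1) :=
  φ ⊓ (atMostF φ k).relabel Sum.inl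

theorem realize_witF {n : ℕ} (φ : L.Formula (Fin n ⊕ Fin 1)) (k : ℕ) (c : Fin n → M) (u : M) :
    (witF φ k).Realize (Sum.elim c (fun _ => u)) ↔
      u ∈ solSet φ c ∧ (solSet φ c).encard ≤ k := by
  rw [witF, Formula.realize_inf, Formula.realize_relabel]
  have : (Sum.elim c (fun _ : Fin 1 => u)) ∘ Sum.inl = c := rfl
  rw [this, realize_atMostF]
  rfl

theorem mem_Acl_iff (X : Set M) (u : M) :
    u ∈ Acl L X ↔ ∃ (n : ℕ) (φ : L.Formula (Fin n ⊕ Fin 1)) (c : Fin n → M) (k : ℕ),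
      (∀ i, c i ∈ X) ∧ (witF φ k).Realize (Sum.elim c (fun _ => u)) := by
  constructor
  · rintro ⟨n, φ, c, hc, hfin, hu⟩
    have hfin' : (solSet φ c).Finite := hfin
    refine ⟨n, φ, c, hfin'.toFinset.card, hc, ?_⟩
    rw [realize_witF]
    exact ⟨hu, le_of_eq hfin'.encard_eq_coe_toFinset_card⟩
  · rintro ⟨n, φ, c, k, hc, hw⟩
    rw [realize_witF] at hw
    exact ⟨n, φ, c, hc, Set.finite_of_encard_le_coe hw.2, hw.1⟩

end AclAux

namespace AclAux

variable {L : FirstOrder.Language} {M : Type*} [L.Structure M]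

/-- Pad parameters on the left block. -/
def padLF {n m : ℕ} (θ : L.Formula (Fin n ⊕ Fin 1)) : L.Formula (Fin (n + m) ⊕ Fin 1) :=
  θ.relabel (Sum.map (Fin.castAdd m) id)

/-- Pad parameters on the right block. -/
def padRF {n m : ℕ} (θ : L.Formula (Fin m ⊕ Fin 1)) : L.Formula (Fin (n + m) ⊕ Fin 1) :=
  θ.relabel (Sum.map (Fin.natAdd n) id)

theorem realize_padLF {n m : ℕ} (θ : L.Formula (Fin n ⊕ Fin 1)) (c : Fin n → M)
    (d : Fin m → M) (v : Fin 1 → M) :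
    (padLF θ : L.Formula (Fin (n + m) ⊕ Fin 1)).Realize (Sum.elim (Fin.append c d) v) ↔
      θ.Realize (Sum.elim c v) := by
  rw [padLF, Formula.realize_relabel]
  have : (Sum.elim (Fin.append c d) v) ∘ (Sum.map (Fin.castAdd m) id) = Sum.elim c v := by
    funext x; cases x <;> simp [Fin.append_left]
  rw [this]

theorem realize_padRF {n m : ℕ} (θ : L.Formula (Fin m ⊕ Fin 1)) (c : Fin n → M)
    (d : Fin m → M) (v : Fin 1 → M) :
    (padRF θ : L.Formula (Fin (n + m) ⊕ Fin 1)).Realize (Sum.elim (Fin.append c d) v) ↔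
      θ.Realize (Sum.elim d v) := by
  rw [padRF, Formula.realize_relabel]
  have : (Sum.elim (Fin.append c d) v) ∘ (Sum.map (Fin.natAdd n) id) = Sum.elim d v := by
    funext x; cases x <;> simp [Fin.append_right]
  rw [this]

theorem append_eval {κ : Type*} {p q : ℕ} (c : Fin p → κ) (d : Fin q → κ) (ev : κ → M) :
    (fun i => ev (Fin.append c d i)) = Fin.append (fun i => ev (c i)) (fun i => ev (d i)) := by
  funext i
  induction i using Fin.addCases with
  | left i => simp [Fin.append_left]
  | right i => simp [Fin.append_right]

theorem append_mem {κ : Type*} {p q : ℕ} (c : Fin p → κ) (d : Fin q → κ) (S : Set κ)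
    (hc : ∀ i, c i ∈ S) (hd : ∀ i, d i ∈ S) : ∀ i, Fin.append c d i ∈ S := by
  intro i
  induction i using Fin.addCases with
  | left i => simpa [Fin.append_left] using hc i
  | right i => simpa [Fin.append_right] using hd i

variable (L) in
/-- A single "witness entry": a formula with `p` parameter slots, a solution bound,
and a parameter tuple drawn from `κ`. -/
abbrev Ent (κ : Type*) : Type _ := Σ p : ℕ, L.Formula (Fin p ⊕ Fin 1) × ℕ × (Fin p → κ)

/-- Disjunction of the guarded formulas of a list of entries, with concatenated parameters. -/
noncomputable def listOr {κ : Type*} :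
    List (Ent L κ) → Σ p : ℕ, L.Formula (Fin p ⊕ Fin 1) × (Fin p → κ)
  | [] => ⟨0, ⊥, finZeroElim⟩
  | e :: t =>
    let r := listOr t
    ⟨e.1 + r.1, padLF (witF e.2.1 e.2.2.1) ⊔ padRF r.2.1, Fin.append e.2.2.2 r.2.2⟩

theorem realize_listOr {κ : Type*} (d : List (Ent L κ)) (ev : κ → M) (u : M) :
    (listOr d).2.1.Realize (Sum.elim (fun i => ev ((listOr d).2.2 i)) (fun _ => u)) ↔
      ∃ e ∈ d, (witF e.2.1 e.2.2.1).Realize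
        (Sum.elim (fun i => ev (e.2.2.2 i)) (fun _ : Fin 1 => u)) := by
  induction d with
  | nil =>
    simp only [listOr, List.not_mem_nil, false_and, exists_false, iff_false]
    intro h
    exact h
  | cons e t ih =>
    simp only [listOr, Formula.realize_sup, List.mem_cons]
    rw [show (fun i => ev ((Fin.append e.2.2.2 (listOr t).2.2) i)) =
        Fin.append (fun i => ev (e.2.2.2 i)) (fun i => ev ((listOr t).2.2 i)) from
      append_eval _ _ ev]
    rw [realize_padLF, realize_padRF, ih]
    constructor
    · rintro (h | ⟨f, hf, hr⟩)
      · exact ⟨e, Or.inl rfl, h⟩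
      · exact ⟨f, Or.inr hf, hr⟩
    · rintro ⟨f, (rfl | hf), hr⟩
      · exact Or.inl hr
      · exact Or.inr ⟨f, hf, hr⟩

end AclAux

namespace AclAux

variable {L : FirstOrder.Language} {M : Type*} [L.Structure M]

theorem forall_fin_one {γ : Type*} {P : (Fin 1 → γ) → Prop} :
    (∀ i : Fin 1 → γ, P i) ↔ ∀ u : γ, P (fun _ => u) := by
  refine ⟨fun h u => h _, fun h i => ?_⟩
  have : i = fun _ => i 0 := funext fun x => congrArg i (Subsingleton.elim x 0)
  rw [this]
  exact h (i 0)

/-- The formula expressing: every `u` satisfying the guarded `φ` and `ψ`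
satisfies `χ`. -/
noncomputable def bigFormula {n m p : ℕ} (φ : L.Formula (Fin n ⊕ Fin 1)) (k : ℕ)
    (ψ : L.Formula (Fin m ⊕ Fin 1)) (l : ℕ) (χ : L.Formula (Fin p ⊕ Fin 1)) :
    L.Formula (Fin (n + m + p)) :=
  Formula.iAlls (Fin 1)
    ((padLF (padLF (witF φ k) ⊓ padRF (witF ψ l))).imp (padRF χ))

theorem realize_bigFormula {n m p : ℕ} (φ : L.Formula (Fin n ⊕ Fin 1)) (k : ℕ)
    (ψ : L.Formula (Fin m ⊕ Fin 1)) (l : ℕ) (χ : L.Formula (Fin p ⊕ Fin 1))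
    (ca : Fin n → M) (cb : Fin m → M) (cc : Fin p → M) :
    (bigFormula φ k ψ l χ).Realize (Fin.append (Fin.append ca cb) cc) ↔
      ∀ u : M,
        ((witF φ k).Realize (Sum.elim ca (fun _ => u)) ∧
         (witF ψ l).Realize (Sum.elim cb (fun _ => u))) →
        χ.Realize (Sum.elim cc (fun _ => u)) := by
  rw [bigFormula, Formula.realize_iAlls, forall_fin_one]
  refine forall_congr' fun u => ?_
  have h1 : (fun a => Sum.elim (Fin.append (Fin.append ca cb) cc) (fun _ : Fin 1 => u) a) =
      Sum.elim (Fin.append (Fin.append ca cb) cc) (fun _ : Fin 1 => u) := rfl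
  rw [h1, Formula.realize_imp, realize_padLF, realize_padRF, Formula.realize_inf,
    realize_padLF, realize_padRF]

/-- Map the parameters of an entry. -/
def entMap {κ κ' : Type*} (f : κ → κ') (e : Ent L κ) : Ent L κ' :=
  ⟨e.1, e.2.1, e.2.2.1, fun i => f (e.2.2.2 i)⟩

theorem realize_main {n m : ℕ} (φ : L.Formula (Fin n ⊕ Fin 1)) (k : ℕ)
    (ψ : L.Formula (Fin m ⊕ Fin 1)) (l : ℕ) {κ : Type*} (ev : κ → M)
    (a : Fin n → κ) (b : Fin m → κ) (d : List (Ent L κ)) :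
    (bigFormula φ k ψ l (listOr d).2.1).Realize
        (fun idx => ev (Fin.append (Fin.append a b) (listOr d).2.2 idx)) ↔
      ∀ u : M,
        ((witF φ k).Realize (Sum.elim (fun i => ev (a i)) (fun _ => u)) ∧
         (witF ψ l).Realize (Sum.elim (fun i => ev (b i)) (fun _ => u))) →
        ∃ e ∈ d, (witF e.2.1 e.2.2.1).Realize
          (Sum.elim (fun i => ev (e.2.2.2 i)) (fun _ : Fin 1 => u)) := by
  have hre : (fun idx => ev (Fin.append (Fin.append a b) (listOr d).2.2 idx)) =
      Fin.append (Fin.append (fun i => ev (a i)) (fun i => ev (b i)))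
        (fun i => ev ((listOr d).2.2 i)) := by
    rw [append_eval]

    rw [append_eval]
  rw [hre, realize_bigFormula]
  exact forall_congr' fun u => imp_congr_right fun _ => realize_listOr d ev u

theorem listOr_param_mem {κ : Type*} (S : Set κ) :
    ∀ (d : List (Ent L κ)), (∀ e ∈ d, ∀ i, e.2.2.2 i ∈ S) → ∀ i, (listOr d).2.2 i ∈ S
  | [], _ => fun i => i.elim0
  | e :: t, h =>
    append_mem _ _ _ (fun i => h e List.mem_cons_self i)
      (listOr_param_mem S t fun f hf => h f (List.mem_cons_of_mem _ hf))

theorem Acl_mono {X Y : Set M} (h : X ⊆ Y) : Acl L X ⊆ Acl L Y := by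
  rintro x ⟨n, φ, c, hc, hfin, hr⟩
  exact ⟨n, φ, c, fun i => h (hc i), hfin, hr⟩

theorem countable_ent {κ : Type*} [Countable κ]
    (h : ∀ p : ℕ, Countable (L.Formula (Fin p ⊕ Fin 1))) : Countable (Ent L κ) := by
  haveI : ∀ p : ℕ, Countable (L.Formula (Fin p ⊕ Fin 1) × ℕ × (Fin p → κ)) := fun p => by
    haveI := h p
    infer_instance
  infer_instance

end AclAux


/-- For countable sets `A, B, C` of random elements, the set of sample points at
which `A(ω)` is algebraically independent from `B(ω)` over `C(ω)` is measurable,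
provided the events determined by first-order formulas are measurable. -/
theorem measurable_pointwise_aclIndep
    (L : FirstOrder.Language) {M : Type*} [L.Structure M]
    (hcount : ∀ n : ℕ, Countable (L.Formula (Fin n)))
    {Ω : Type*} [MeasurableSpace Ω] (μ : Measure Ω) [IsProbabilityMeasure μ]
    (A B C : Set (Ω → M)) (hA : A.Countable) (hB : B.Countable) (hC : C.Countable)
    (hmeas : ∀ (n : ℕ) (φ : L.Formula (Fin n)) (a : Fin n → (Ω → M)),
      (∀ i, a i ∈ A ∪ B ∪ C) →
      MeasurableSet {ω : Ω | φ.Realize (fun i => a i ω)}) :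
    MeasurableSet {ω : Ω |
      Acl L ((fun f : Ω → M => f ω) '' A ∪ (fun f : Ω → M => f ω) '' C) ∩
        Acl L ((fun f : Ω → M => f ω) '' B ∪ (fun f : Ω → M => f ω) '' C) =
      Acl L ((fun f : Ω → M => f ω) '' C)} := by
  classical
  haveI hACc : Countable ↥(A ∪ C) := (hA.union hC).to_subtype
  haveI hBCc : Countable ↥(B ∪ C) := (hB.union hC).to_subtype
  haveI hCc : Countable ↥C := hC.to_subtype
  have hF : ∀ p : ℕ, Countable (L.Formula (Fin p ⊕ Fin 1)) := fun p => by
    haveI := hcount (p + 1)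
    exact Countable.of_equiv _
      (BoundedFormula.relabelEquiv (finSumFinEquiv : Fin p ⊕ Fin 1 ≃ Fin (p + 1))
        (k := 0)).symm
  haveI hEntAC : Countable (AclAux.Ent L ↥(A ∪ C)) := AclAux.countable_ent hF
  haveI hEntBC : Countable (AclAux.Ent L ↥(B ∪ C)) := AclAux.countable_ent hF
  haveI hEntC : Countable (AclAux.Ent L ↥C) := AclAux.countable_ent hF
  have key : {ω : Ω |
      Acl L ((fun f : Ω → M => f ω) '' A ∪ (fun f : Ω → M => f ω) '' C) ∩
        Acl L ((fun f : Ω → M => f ω) '' B ∪ (fun f : Ω → M => f ω) '' C) =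
      Acl L ((fun f : Ω → M => f ω) '' C)} =
      ⋂ i : AclAux.Ent L ↥(A ∪ C) × AclAux.Ent L ↥(B ∪ C), ⋃ j : List (AclAux.Ent L ↥C),
        {ω : Ω | (AclAux.bigFormula i.1.2.1 i.1.2.2.1 i.2.2.1 i.2.2.2.1
            (AclAux.listOr (j.map (AclAux.entMap Subtype.val))).2.1).Realize
          (fun idx => Fin.append
            (Fin.append (fun t => (i.1.2.2.2 t : Ω → M)) (fun t => (i.2.2.2.2 t : Ω → M)))
            (AclAux.listOr (j.map (AclAux.entMap Subtype.val))).2.2 idx ω)} := by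
    ext ω
    simp only [Set.mem_setOf_eq, Set.mem_iInter, Set.mem_iUnion]
    constructor
    · intro hω i
      obtain ⟨⟨n, φ, k, a⟩, ⟨m, ψ, l, b⟩⟩ := i
      set U : Set M := {u : M |
        (AclAux.witF φ k).Realize (Sum.elim (fun t => (a t : Ω → M) ω) (fun _ => u)) ∧
        (AclAux.witF ψ l).Realize (Sum.elim (fun t => (b t : Ω → M) ω) (fun _ => u))}
        with hUdef
      have hUfin : U.Finite := by
        rcases Set.eq_empty_or_nonempty U with h | ⟨u₀, hu₀⟩
        · rw [h]; exact Set.finite_empty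
        · have hk := ((AclAux.realize_witF φ k _ u₀).1 hu₀.1).2
          have hfin := Set.finite_of_encard_le_coe hk
          exact hfin.subset (fun u hu => ((AclAux.realize_witF φ k _ u).1 hu.1).1)
      have hwit : ∀ u : M, ∃ e : AclAux.Ent L ↥C, u ∈ U →
          (AclAux.witF e.2.1 e.2.2.1).Realize
            (Sum.elim (fun t => (e.2.2.2 t : Ω → M) ω) (fun _ : Fin 1 => u)) := by
        intro u
        by_cases hu : u ∈ U
        · have huAC : u ∈ Acl L ((fun f : Ω → M => f ω) '' A ∪ (fun f : Ω → M => f ω) '' C) := by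
            rw [AclAux.mem_Acl_iff]
            refine ⟨n, φ, fun t => (a t : Ω → M) ω, k, fun t => ?_, hu.1⟩
            rcases (a t).2 with h | h
            · exact Or.inl (Set.mem_image_of_mem _ h)
            · exact Or.inr (Set.mem_image_of_mem _ h)
          have huBC : u ∈ Acl L ((fun f : Ω → M => f ω) '' B ∪ (fun f : Ω → M => f ω) '' C) := by
            rw [AclAux.mem_Acl_iff]
            refine ⟨m, ψ, fun t => (b t : Ω → M) ω, l, fun t => ?_, hu.2⟩
            rcases (b t).2 with h | h
            · exact Or.inl (Set.mem_image_of_mem _ h)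
            · exact Or.inr (Set.mem_image_of_mem _ h)
          have huC : u ∈ Acl L ((fun f : Ω → M => f ω) '' C) := by
            rw [← hω]; exact ⟨huAC, huBC⟩
          rw [AclAux.mem_Acl_iff] at huC
          obtain ⟨p, χ, cv, q, hcv, hre⟩ := huC
          have hg : ∀ t, ∃ g : Ω → M, g ∈ C ∧ g ω = cv t := by
            intro t
            rcases hcv t with ⟨g, hgC, hgω⟩
            exact ⟨g, hgC, hgω⟩
          choose g hgC hgω using hg
          refine ⟨⟨p, χ, q, fun t => ⟨g t, hgC t⟩⟩, fun _ => ?_⟩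
          show (AclAux.witF χ q).Realize (Sum.elim (fun t => g t ω) (fun _ => u))
          rw [show (fun t => g t ω) = cv from funext hgω]
          exact hre
        · exact ⟨⟨0, ⊥, 0, finZeroElim⟩, fun h => absurd h hu⟩
      choose E hE using hwit
      refine ⟨hUfin.toFinset.toList.map E,
        (AclAux.realize_main φ k ψ l (fun f : Ω → M => f ω)
          (fun t => (a t : Ω → M)) (fun t => (b t : Ω → M)) _).mpr ?_⟩
      intro u hu
      have huU : u ∈ U := ⟨hu.1, hu.2⟩
      refine ⟨AclAux.entMap Subtype.val (E u), ?_, hE u huU⟩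
      exact List.mem_map_of_mem (List.mem_map_of_mem
        (Finset.mem_toList.2 (hUfin.mem_toFinset.2 huU)))
    · intro h
      refine Set.Subset.antisymm ?_
        (Set.subset_inter (AclAux.Acl_mono Set.subset_union_right)
          (AclAux.Acl_mono Set.subset_union_right))
      rintro x ⟨hx1, hx2⟩
      rw [AclAux.mem_Acl_iff] at hx1 hx2
      obtain ⟨n, φ, cA, k, hcA, hrA⟩ := hx1
      obtain ⟨m, ψ, cB, l, hcB, hrB⟩ := hx2
      have hga : ∀ t, ∃ g : Ω → M, g ∈ A ∪ C ∧ g ω = cA t := by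
        intro t
        rcases hcA t with h' | h'
        · rcases h' with ⟨g, hg, hgω⟩; exact ⟨g, Or.inl hg, hgω⟩
        · rcases h' with ⟨g, hg, hgω⟩; exact ⟨g, Or.inr hg, hgω⟩
      have hgb : ∀ t, ∃ g : Ω → M, g ∈ B ∪ C ∧ g ω = cB t := by
        intro t
        rcases hcB t with h' | h'
        · rcases h' with ⟨g, hg, hgω⟩; exact ⟨g, Or.inl hg, hgω⟩
        · rcases h' with ⟨g, hg, hgω⟩; exact ⟨g, Or.inr hg, hgω⟩
      choose ga hgaM hgaω using hga
      choose gb hgbM hgbω using hgb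
      obtain ⟨j, hj⟩ := h (⟨n, φ, k, fun t => ⟨ga t, hgaM t⟩⟩, ⟨m, ψ, l, fun t => ⟨gb t, hgbM t⟩⟩)
      have hsem := (AclAux.realize_main φ k ψ l (fun f : Ω → M => f ω)
        (fun t => ((⟨ga t, hgaM t⟩ : ↥(A ∪ C)) : Ω → M))
        (fun t => ((⟨gb t, hgbM t⟩ : ↥(B ∪ C)) : Ω → M)) _).mp hj
      have hx := hsem x ?_
      · obtain ⟨e, he, hre⟩ := hx
        rcases List.mem_map.1 he with ⟨e₀, he₀, rfl⟩
        rw [AclAux.mem_Acl_iff]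
        exact ⟨e₀.1, e₀.2.1, fun i => (e₀.2.2.2 i : Ω → M) ω, e₀.2.2.1,
          fun i => Set.mem_image_of_mem _ (e₀.2.2.2 i).2, hre⟩
      · constructor
        · show (AclAux.witF φ k).Realize (Sum.elim (fun t => ga t ω) (fun _ => x))
          rw [show (fun t => ga t ω) = cA from funext hgaω]
          exact hrA
        · show (AclAux.witF ψ l).Realize (Sum.elim (fun t => gb t ω) (fun _ => x))
          rw [show (fun t => gb t ω) = cB from funext hgbω]
          exact hrB
  rw [key]
  refine MeasurableSet.iInter fun i => MeasurableSet.iUnion fun j => hmeas _ _ _ ?_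
  intro idx
  refine AclAux.append_mem _ _ _ (AclAux.append_mem _ _ _ ?_ ?_) ?_ idx
  · intro t
    rcases (i.1.2.2.2 t).2 with h | h
    · exact Or.inl (Or.inl h)
    · exact Or.inr h
  · intro t
    rcases (i.2.2.2.2 t).2 with h | h
    · exact Or.inl (Or.inr h)
    · exact Or.inr h
  · refine AclAux.listOr_param_mem _ _ ?_
    intro e he t
    rcases List.mem_map.1 he with ⟨e₀, he₀, rfl⟩
    exact Or.inr (e₀.2.2.2 t).2
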